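/- In a Cartesian tangent category, let A and A' be differential bundles over the final object with associated projections p̂ = {1_{TA}} and p̂' = {1_{TA'}}. A map f: A → A' is a linear bundle morphism if and only if it is differentially linear, i.e. T(f)p̂' = p̂f. -/

import Mathlib

open CategoryTheory CategoryTheory.Limits

universe v u

variable {C : Type u} [Category.{v} C]

/-- Iterated power of an endofunctor. -/
def fpow (T : C ⥤ C) : ℕ → C ⥤ C
  | 0 => 𝟭 C
  | n + 1 => fpow T n ⋙ T

/-- Tangent structure on a category (Cockett–Cruttwell). -/
structure TangentStructure (C : Type u) [Category.{v} C] where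
  T : C ⥤ C
  p : T ⟶ 𝟭 C
  T2 : C ⥤ C
  π0 : T2 ⟶ T
  π1 : T2 ⟶ T
  /-- the chosen object `T2 M` is the pullback of `p` along itself -/
  isPB0 : ∀ M : C, IsPullback (π0.app M) (π1.app M) (p.app M) (p.app M)
  /-- this pullback is preserved by `T` -/
  isPB1 : ∀ M : C, IsPullback (T.map (π0.app M)) (T.map (π1.app M))
      (T.map (p.app M)) (T.map (p.app M))
  /-- and indeed by every power `Tⁿ` -/
  isPBk : ∀ (k : ℕ) (M : C),
    IsPullback ((fpow T k).map (π0.app M)) ((fpow T k).map (π1.app M))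
      ((fpow T k).map (p.app M)) ((fpow T k).map (p.app M))
  /-- all finite wide pullback powers of `p` exist -/
  hasWide : ∀ (n : ℕ) (M : C),
    HasLimit (WidePullbackShape.wideCospan M (fun _ : Fin n => T.obj M) (fun _ => p.app M))
  /-- and are preserved by every power `Tⁿ` -/
  presWide : ∀ (n k : ℕ) (M : C),
    PreservesLimit (WidePullbackShape.wideCospan M (fun _ : Fin n => T.obj M) (fun _ => p.app M))
      (fpow T k)
  add : T2 ⟶ T
  zero : 𝟭 C ⟶ T
  add_p : ∀ M : C, add.app M ≫ p.app M = π0.app M ≫ p.app M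
  zero_p : ∀ M : C, zero.app M ≫ p.app M = 𝟙 M
  add_comm : ∀ {X M : C} (f g : X ⟶ T.obj M) (h : f ≫ p.app M = g ≫ p.app M),
    (isPB0 M).lift f g h ≫ add.app M = (isPB0 M).lift g f h.symm ≫ add.app M
  add_zero : ∀ {X M : C} (f : X ⟶ T.obj M)
    (h : (f ≫ p.app M ≫ zero.app M) ≫ p.app M = f ≫ p.app M),
    (isPB0 M).lift (f ≫ p.app M ≫ zero.app M) f h ≫ add.app M = f
  add_assoc : ∀ {X M : C} (f g h : X ⟶ T.obj M)
    (hfg : f ≫ p.app M = g ≫ p.app M) (hgh : g ≫ p.app M = h ≫ p.app M)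
    (h1 : ((isPB0 M).lift f g hfg ≫ add.app M) ≫ p.app M = h ≫ p.app M)
    (h2 : f ≫ p.app M = ((isPB0 M).lift g h hgh ≫ add.app M) ≫ p.app M),
    (isPB0 M).lift ((isPB0 M).lift f g hfg ≫ add.app M) h h1 ≫ add.app M =
      (isPB0 M).lift f ((isPB0 M).lift g h hgh ≫ add.app M) h2 ≫ add.app M
  l : T ⟶ T ⋙ T
  l_Tp : ∀ M : C, l.app M ≫ T.map (p.app M) = p.app M ≫ zero.app M
  l_zero : ∀ M : C, zero.app M ≫ l.app M = zero.app M ≫ T.map (zero.app M)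
  l_add : ∀ {X M : C} (f g : X ⟶ T.obj M) (h : f ≫ p.app M = g ≫ p.app M)
    (h' : (f ≫ l.app M) ≫ T.map (p.app M) = (g ≫ l.app M) ≫ T.map (p.app M)),
    (isPB0 M).lift f g h ≫ add.app M ≫ l.app M =
      (isPB1 M).lift (f ≫ l.app M) (g ≫ l.app M) h' ≫ T.map (add.app M)
  c : T ⋙ T ⟶ T ⋙ T
  c_p : ∀ M : C, c.app M ≫ p.app (T.obj M) = T.map (p.app M)
  c_zero : ∀ M : C, T.map (zero.app M) ≫ c.app M = zero.app (T.obj M)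
  c_add : ∀ {X M : C} (f g : X ⟶ T.obj (T.obj M))
    (h : f ≫ T.map (p.app M) = g ≫ T.map (p.app M))
    (h' : (f ≫ c.app M) ≫ p.app (T.obj M) = (g ≫ c.app M) ≫ p.app (T.obj M)),
    (isPB1 M).lift f g h ≫ T.map (add.app M) ≫ c.app M =
      (isPB0 (T.obj M)).lift (f ≫ c.app M) (g ≫ c.app M) h' ≫ add.app (T.obj M)
  c_c : ∀ M : C, c.app M ≫ c.app M = 𝟙 _
  l_c : ∀ M : C, l.app M ≫ c.app M = l.app M
  l_l : ∀ M : C, l.app M ≫ T.map (l.app M) = l.app M ≫ l.app (T.obj M)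
  c_coh : ∀ M : C, T.map (c.app M) ≫ c.app (T.obj M) ≫ T.map (c.app M) =
      c.app (T.obj M) ≫ T.map (c.app M) ≫ c.app (T.obj M)
  c_l : ∀ M : C, c.app M ≫ T.map (l.app M) =
      l.app (T.obj M) ≫ T.map (c.app M) ≫ c.app (T.obj M)
  univ : ∀ (k : ℕ) (M : C)
    (h : (π0.app M ≫ l.app M) ≫ T.map (p.app M) =
         (π1.app M ≫ zero.app (T.obj M)) ≫ T.map (p.app M)),
    IsPullback
      ((fpow T k).map ((isPB1 M).lift (π0.app M ≫ l.app M) (π1.app M ≫ zero.app (T.obj M)) h ≫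
        T.map (add.app M)))
      ((fpow T k).map (π0.app M ≫ p.app M))
      ((fpow T k).map (T.map (p.app M)))
      ((fpow T k).map (zero.app M))

namespace TangentStructure

/-- The data of a differential bundle over `M` with total space `E`. -/
structure DiffBundleData (TS : TangentStructure C) (E M : C) where
  q : E ⟶ M
  E2 : C
  p0 : E2 ⟶ E
  p1 : E2 ⟶ E
  σ : E2 ⟶ E
  ζ : M ⟶ E
  lam : E ⟶ TS.T.obj E

variable (TS : TangentStructure C)

/-- The axioms making `D` a differential bundle (without the universality of the lift). -/
structure IsPreDiffBundle {E M : C} (D : TS.DiffBundleData E M) : Prop where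
  isPB0 : IsPullback D.p0 D.p1 D.q D.q
  isPB1 : IsPullback (TS.T.map D.p0) (TS.T.map D.p1) (TS.T.map D.q) (TS.T.map D.q)
  isPBk : ∀ k : ℕ, IsPullback ((fpow TS.T k).map D.p0) ((fpow TS.T k).map D.p1)
      ((fpow TS.T k).map D.q) ((fpow TS.T k).map D.q)
  hasWide : ∀ n : ℕ,
    HasLimit (WidePullbackShape.wideCospan M (fun _ : Fin n => E) (fun _ => D.q))
  presWide : ∀ n k : ℕ,
    PreservesLimit (WidePullbackShape.wideCospan M (fun _ : Fin n => E) (fun _ => D.q))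
      (fpow TS.T k)
  σ_q : D.σ ≫ D.q = D.p0 ≫ D.q
  ζ_q : D.ζ ≫ D.q = 𝟙 M
  σ_comm : ∀ {X : C} (f g : X ⟶ E) (h : f ≫ D.q = g ≫ D.q),
    isPB0.lift f g h ≫ D.σ = isPB0.lift g f h.symm ≫ D.σ
  σ_zero : ∀ {X : C} (f : X ⟶ E) (h : (f ≫ D.q ≫ D.ζ) ≫ D.q = f ≫ D.q),
    isPB0.lift (f ≫ D.q ≫ D.ζ) f h ≫ D.σ = f
  σ_assoc : ∀ {X : C} (f g h : X ⟶ E)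
    (hfg : f ≫ D.q = g ≫ D.q) (hgh : g ≫ D.q = h ≫ D.q)
    (h1 : (isPB0.lift f g hfg ≫ D.σ) ≫ D.q = h ≫ D.q)
    (h2 : f ≫ D.q = (isPB0.lift g h hgh ≫ D.σ) ≫ D.q),
    isPB0.lift (isPB0.lift f g hfg ≫ D.σ) h h1 ≫ D.σ =
      isPB0.lift f (isPB0.lift g h hgh ≫ D.σ) h2 ≫ D.σ
  lam_Tq : D.lam ≫ TS.T.map D.q = D.q ≫ TS.zero.app M
  lam_zero0 : D.ζ ≫ D.lam = TS.zero.app M ≫ TS.T.map D.ζ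
  lam_add0 : ∀ {X : C} (f g : X ⟶ E) (h : f ≫ D.q = g ≫ D.q)
    (h' : (f ≫ D.lam) ≫ TS.T.map D.q = (g ≫ D.lam) ≫ TS.T.map D.q),
    isPB0.lift f g h ≫ D.σ ≫ D.lam =
      isPB1.lift (f ≫ D.lam) (g ≫ D.lam) h' ≫ TS.T.map D.σ
  lam_p : D.lam ≫ TS.p.app E = D.q ≫ D.ζ
  lam_zero1 : D.ζ ≫ D.lam = D.ζ ≫ TS.zero.app E
  lam_add1 : ∀ {X : C} (f g : X ⟶ E) (h : f ≫ D.q = g ≫ D.q)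
    (h' : (f ≫ D.lam) ≫ TS.p.app E = (g ≫ D.lam) ≫ TS.p.app E),
    isPB0.lift f g h ≫ D.σ ≫ D.lam =
      (TS.isPB0 E).lift (f ≫ D.lam) (g ≫ D.lam) h' ≫ TS.add.app E
  lam_l : D.lam ≫ TS.l.app E = D.lam ≫ TS.T.map D.lam

/-- The full axioms for a differential bundle, including the universality of the lift. -/
structure IsDiffBundle {E M : C} (D : TS.DiffBundleData E M)
    extends TS.IsPreDiffBundle D : Prop where
  univ : ∀ (k : ℕ)
    (h : (D.p0 ≫ D.lam) ≫ TS.T.map D.q = (D.p1 ≫ TS.zero.app E) ≫ TS.T.map D.q),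
    IsPullback
      ((fpow TS.T k).map (toIsPreDiffBundle.isPB1.lift (D.p0 ≫ D.lam)
        (D.p1 ≫ TS.zero.app E) h ≫ TS.T.map D.σ))
      ((fpow TS.T k).map (D.p0 ≫ D.q))
      ((fpow TS.T k).map (TS.T.map D.q))
      ((fpow TS.T k).map (TS.zero.app M))

variable {TS}

lemma mu_w {E M : C} {D : TS.DiffBundleData E M} (hD : TS.IsPreDiffBundle D) :
    (D.p0 ≫ D.lam) ≫ TS.T.map D.q = (D.p1 ≫ TS.zero.app E) ≫ TS.T.map D.q := by
  have hz : TS.zero.app E ≫ TS.T.map D.q = D.q ≫ TS.zero.app M := by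
    simpa using (TS.zero.naturality D.q).symm
  rw [Category.assoc, hD.lam_Tq, Category.assoc, hz, ← Category.assoc, ← Category.assoc,
    hD.isPB0.w]

/-- The map `μ = ⟨π₀λ, π₁0⟩T(σ) : E₂ ⟶ TE` of a differential bundle. -/
noncomputable def DiffBundleData.mu {E M : C} (D : TS.DiffBundleData E M)
    (hD : TS.IsPreDiffBundle D) : D.E2 ⟶ TS.T.obj E :=
  hD.isPB1.lift (D.p0 ≫ D.lam) (D.p1 ≫ TS.zero.app E) (mu_w hD) ≫ TS.T.map D.σ

/-- `IsBracket f b` says that `b` satisfies the defining property of the bracket `{f}`: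
`f = ⟨bλ, fp0⟩T(σ)`. -/
def IsBracket {E M : C} (D : TS.DiffBundleData E M)
    (h1 : IsPullback (TS.T.map D.p0) (TS.T.map D.p1) (TS.T.map D.q) (TS.T.map D.q))
    {X : C} (f : X ⟶ TS.T.obj E) (b : X ⟶ E) : Prop :=
  ∃ w, f = h1.lift (b ≫ D.lam) (f ≫ TS.p.app E ≫ TS.zero.app E) w ≫ TS.T.map D.σ

/-- `(f, g)` is a morphism of differential bundles. -/
def IsBundleHom {E M E' M' : C} (D : TS.DiffBundleData E M) (D' : TS.DiffBundleData E' M')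
    (f : E ⟶ E') (g : M ⟶ M') : Prop :=
  f ≫ D'.q = D.q ≫ g

/-- `(f, g)` is a linear morphism of differential bundles. -/
def IsLinearBundleHom {E M E' M' : C} (D : TS.DiffBundleData E M) (D' : TS.DiffBundleData E' M')
    (f : E ⟶ E') (g : M ⟶ M') : Prop :=
  f ≫ D'.q = D.q ≫ g ∧ f ≫ D'.lam = D.lam ≫ TS.T.map f

/-- Applying the tangent functor to a differential bundle. -/
def DiffBundleData.tangent {E M : C} (D : TS.DiffBundleData E M) :
    TS.DiffBundleData (TS.T.obj E) (TS.T.obj M) where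
  q := TS.T.map D.q
  E2 := TS.T.obj D.E2
  p0 := TS.T.map D.p0
  p1 := TS.T.map D.p1
  σ := TS.T.map D.σ
  ζ := TS.T.map D.ζ
  lam := TS.T.map D.lam ≫ TS.c.app E

end TangentStructure

namespace TangentStructure

variable [HasFiniteProducts C]

/-- The data of a differential bundle over the final object on `A`, with `E₂ = A ⨯ A`. -/
noncomputable def termData (TS : TangentStructure C) {A : C} (σ : A ⨯ A ⟶ A) (ζ : ⊤_ C ⟶ A)
    (lam : A ⟶ TS.T.obj A) : TS.DiffBundleData A (⊤_ C) where
  q := terminal.from A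
  E2 := A ⨯ A
  p0 := prod.fst
  p1 := prod.snd
  σ := σ
  ζ := ζ
  lam := lam

/-- A differential object in a Cartesian tangent category: a commutative monoid
`(A, σ, ζ)` together with a projection `p̂ : TA ⟶ A` such that `(p̂, p)` is a product
diagram, `(p̂, !)` and `(!, p̂)` are additive bundle morphisms, and `ℓ·T(p̂)·p̂ = p̂`. -/
structure DiffObj (TS : TangentStructure C) (A : C) where
  σ : A ⨯ A ⟶ A
  ζ : ⊤_ C ⟶ A
  phat : TS.T.obj A ⟶ A
  mon_comm : (prod.braiding A A).hom ≫ σ = σ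
  mon_assoc : prod.map σ (𝟙 A) ≫ σ = (prod.associator A A A).hom ≫ prod.map (𝟙 A) σ ≫ σ
  mon_unit : prod.lift (terminal.from A ≫ ζ) (𝟙 A) ≫ σ = 𝟙 A
  prod_diag : ∀ {X : C} (a b : X ⟶ A),
    ∃! u : X ⟶ TS.T.obj A, u ≫ phat = a ∧ u ≫ TS.p.app A = b
  phat_Tσ : TS.T.map σ ≫ phat =
    prod.lift (TS.T.map prod.fst ≫ phat) (TS.T.map prod.snd ≫ phat) ≫ σ
  phat_Tζ : TS.T.map ζ ≫ phat = terminal.from _ ≫ ζ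
  phat_add : TS.add.app A ≫ phat =
    prod.lift (TS.π0.app A ≫ phat) (TS.π1.app A ≫ phat) ≫ σ
  phat_zero : TS.zero.app A ≫ phat = terminal.from A ≫ ζ
  phat_l : TS.l.app A ≫ TS.T.map phat ≫ phat = phat

/-- The "exchange" map swapping the two middle factors of a fourfold product. -/
noncomputable def exch (A B A' B' : C) : (A ⨯ B) ⨯ (A' ⨯ B') ⟶ (A ⨯ A') ⨯ (B ⨯ B') :=
  prod.lift (prod.map prod.fst prod.fst) (prod.map prod.snd prod.snd)

variable (TS : TangentStructure C) [PreservesFiniteProducts TS.T]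

/-- Coherent differential structure: a canonical differential bundle over the final
object on every object, compatible with products ([CDS.1]) and with `T` ([CDS.2]). -/
structure CoherentDiff where
  σ : ∀ A : C, A ⨯ A ⟶ A
  ζ : ∀ A : C, ⊤_ C ⟶ A
  lam : ∀ A : C, A ⟶ TS.T.obj A
  isBun : ∀ A : C, TS.IsDiffBundle (termData TS (σ A) (ζ A) (lam A))
  cds1_ζ : ∀ A B : C, ζ (A ⨯ B) = prod.lift (ζ A) (ζ B)
  cds1_σ : ∀ A B : C, σ (A ⨯ B) = exch A B A B ≫ prod.map (σ A) (σ B)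
  cds1_lam : ∀ A B : C, lam (A ⨯ B) =
    prod.map (lam A) (lam B) ≫ (PreservesLimitPair.iso TS.T A B).inv
  cds2_ζ : ∀ A : C, ζ (TS.T.obj A) = (PreservesTerminal.iso TS.T).inv ≫ TS.T.map (ζ A)
  cds2_σ : ∀ A : C, σ (TS.T.obj A) = (PreservesLimitPair.iso TS.T A A).inv ≫ TS.T.map (σ A)
  cds2_lam : ∀ A : C, lam (TS.T.obj A) = TS.T.map (lam A) ≫ TS.c.app A

variable {TS}

lemma phat_w {A : C} {σ : A ⨯ A ⟶ A} {ζ : ⊤_ C ⟶ A} {lam : A ⟶ TS.T.obj A} :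
    𝟙 (TS.T.obj A) ≫ (fpow TS.T 0).map (TS.T.map (termData TS σ ζ lam).q) =
      (TS.p.app A ≫ (termData TS σ ζ lam).q) ≫ (fpow TS.T 0).map (TS.zero.app (⊤_ C)) := by
  exact (terminalIsTerminal.isTerminalObj TS.T (⊤_ C)).hom_ext _ _

/-- The projection `p̂ = {1_{TA}} : TA ⟶ A` of a differential bundle over the final
object, obtained from the universality of the lift. -/
noncomputable def bPhat {A : C} {σ : A ⨯ A ⟶ A} {ζ : ⊤_ C ⟶ A} {lam : A ⟶ TS.T.obj A}
    (hD : TS.IsDiffBundle (termData TS σ ζ lam)) : TS.T.obj A ⟶ A :=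
  (hD.univ 0 (mu_w hD.toIsPreDiffBundle)).lift (𝟙 (TS.T.obj A))
    (TS.p.app A ≫ (termData TS σ ζ lam).q) phat_w ≫ prod.fst

namespace CoherentDiff

variable (cd : CoherentDiff TS)

/-- The canonical projection `p̂_A` determined by a coherent differential structure. -/
noncomputable def phat (A : C) : TS.T.obj A ⟶ A := bPhat (cd.isBun A)

/-- The canonical map `μ_A = ⟨π₀λ_A, π₁0⟩T(σ_A) : A ⨯ A ⟶ TA`. -/
noncomputable def mu (A : C) : A ⨯ A ⟶ TS.T.obj A :=
  (termData TS (cd.σ A) (cd.ζ A) (cd.lam A)).mu (cd.isBun A).toIsPreDiffBundle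

/-- The differential combinator `D[f] := μ_A · T(f) · p̂_B`. -/
noncomputable def diff {A B : C} (f : A ⟶ B) : A ⨯ A ⟶ B :=
  cd.mu A ≫ TS.T.map f ≫ cd.phat B

/-- Addition of parallel maps determined by the canonical monoid structures. -/
noncomputable def homAdd {X A : C} (f g : X ⟶ A) : X ⟶ A := prod.lift f g ≫ cd.σ A

/-- The zero map determined by the canonical monoid structures. -/
noncomputable def homZero (X A : C) : X ⟶ A := terminal.from X ≫ cd.ζ A

end CoherentDiff

end TangentStructure

namespace TangentStructure

section Statement17Aux

variable [HasFiniteProducts C] {TS : TangentStructure C} [PreservesFiniteProducts TS.T]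

lemma tTermExt {X : C} (f g : X ⟶ TS.T.obj (⊤_ C)) : f = g :=
  (terminalIsTerminal.isTerminalObj TS.T (⊤_ C)).hom_ext f g

lemma p_nat {Y Z : C} (g : Y ⟶ Z) :
    TS.T.map g ≫ TS.p.app Z = TS.p.app Y ≫ g := by
  simpa using TS.p.naturality g

lemma zero_nat {Y Z : C} (g : Y ⟶ Z) :
    g ≫ TS.zero.app Z = TS.zero.app Y ≫ TS.T.map g := by
  simpa using TS.zero.naturality g

lemma add_nat {Y Z : C} (g : Y ⟶ Z) :
    TS.add.app Y ≫ TS.T.map g = TS.T2.map g ≫ TS.add.app Z :=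
  (TS.add.naturality g).symm

lemma pi0_nat {Y Z : C} (g : Y ⟶ Z) :
    TS.T2.map g ≫ TS.π0.app Z = TS.π0.app Y ≫ TS.T.map g :=
  TS.π0.naturality g

lemma pi1_nat {Y Z : C} (g : Y ⟶ Z) :
    TS.T2.map g ≫ TS.π1.app Z = TS.π1.app Y ≫ TS.T.map g :=
  TS.π1.naturality g

variable {A : C} {σ : A ⨯ A ⟶ A} {ζ : ⊤_ C ⟶ A} {lam : A ⟶ TS.T.obj A}

/-- abbreviation for the `μ` map of a differential bundle over the terminal object. -/
noncomputable def muT (hD : TS.IsDiffBundle (termData TS σ ζ lam)) : A ⨯ A ⟶ TS.T.obj A :=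
  (termData TS σ ζ lam).mu hD.toIsPreDiffBundle

variable (hD : TS.IsDiffBundle (termData TS σ ζ lam))

include hD

lemma liftPB1_congr {X : C} {x x' y y' : X ⟶ TS.T.obj A} (hx : x = x') (hy : y = y')
    (w : x ≫ TS.T.map (termData TS σ ζ lam).q = y ≫ TS.T.map (termData TS σ ζ lam).q)
    (w' : x' ≫ TS.T.map (termData TS σ ζ lam).q = y' ≫ TS.T.map (termData TS σ ζ lam).q) :
    hD.isPB1.lift x y w = hD.isPB1.lift x' y' w' := by
  subst hx; subst hy; rfl

lemma mu_def :
    muT hD = hD.isPB1.lift (prod.fst ≫ lam) (prod.snd ≫ TS.zero.app A) (tTermExt _ _) ≫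
      TS.T.map σ := by
  show (termData TS σ ζ lam).mu hD.toIsPreDiffBundle = _
  unfold DiffBundleData.mu
  congr 1

lemma pair_mu {X : C} (a b : X ⟶ A) :
    prod.lift a b ≫ muT hD =
      hD.isPB1.lift (a ≫ lam) (b ≫ TS.zero.app A) (tTermExt _ _) ≫ TS.T.map σ := by
  rw [mu_def hD, ← Category.assoc]
  congr 1
  apply hD.isPB1.hom_ext
  · rw [Category.assoc, hD.isPB1.lift_fst, hD.isPB1.lift_fst, ← Category.assoc]
    congr 1
    exact Limits.prod.lift_fst a b
  · rw [Category.assoc, hD.isPB1.lift_snd, hD.isPB1.lift_snd, ← Category.assoc]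
    congr 1
    exact Limits.prod.lift_snd a b

lemma mu_mono {X : C} {u v : X ⟶ A ⨯ A} (h : u ≫ muT hD = v ≫ muT hD) : u = v := by
  apply (hD.univ 0 (mu_w hD.toIsPreDiffBundle)).hom_ext
  · exact h
  · exact terminalIsTerminal.hom_ext _ _

lemma pb0_lift_eq {X : C} (a b : X ⟶ A)
    (w : a ≫ (termData TS σ ζ lam).q = b ≫ (termData TS σ ζ lam).q) :
    hD.isPB0.lift a b w = prod.lift a b := by
  apply Limits.prod.hom_ext
  · exact (hD.isPB0.lift_fst a b w).trans (Limits.prod.lift_fst a b).symm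
  · exact (hD.isPB0.lift_snd a b w).trans (Limits.prod.lift_snd a b).symm

lemma sigma_comm {X : C} (a b : X ⟶ A) :
    prod.lift a b ≫ σ = prod.lift b a ≫ σ := by
  have h := hD.toIsPreDiffBundle.σ_comm a b (terminalIsTerminal.hom_ext _ _)
  rw [pb0_lift_eq hD, pb0_lift_eq hD] at h
  exact h

lemma sigma_unit_r : prod.lift (terminal.from A ≫ ζ) (𝟙 A) ≫ σ = 𝟙 A := by
  have h := hD.toIsPreDiffBundle.σ_zero (𝟙 A) (terminalIsTerminal.hom_ext _ _)
  rw [pb0_lift_eq hD, Category.id_comp] at h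
  exact h

lemma sigma_unit_l : prod.lift (𝟙 A) (terminal.from A ≫ ζ) ≫ σ = 𝟙 A := by
  rw [sigma_comm hD]; exact sigma_unit_r hD

lemma lam_p_eq {X : C} (a b : X ⟶ A) :
    (a ≫ lam) ≫ TS.p.app A = (b ≫ lam) ≫ TS.p.app A := by
  have lp : lam ≫ TS.p.app A = terminal.from A ≫ ζ := hD.toIsPreDiffBundle.lam_p
  rw [Category.assoc, Category.assoc, lp, ← Category.assoc, ← Category.assoc,
    terminalIsTerminal.hom_ext (a ≫ terminal.from A) (b ≫ terminal.from A)]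

lemma lam_add {X : C} (a b : X ⟶ A)
    (w : (a ≫ lam) ≫ TS.p.app A = (b ≫ lam) ≫ TS.p.app A) :
    (TS.isPB0 A).lift (a ≫ lam) (b ≫ lam) w ≫ TS.add.app A = prod.lift a b ≫ σ ≫ lam := by
  have h := hD.toIsPreDiffBundle.lam_add1 a b (terminalIsTerminal.hom_ext _ _) w
  rw [pb0_lift_eq hD] at h
  exact h.symm

lemma lam_pair : prod.lift (𝟙 A) (terminal.from A ≫ ζ) ≫ muT hD = lam := by
  rw [pair_mu hD]
  trans lam ≫ TS.T.map (prod.lift (𝟙 A) (terminal.from A ≫ ζ)) ≫ TS.T.map σ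
  · rw [← Category.assoc]
    congr 1
    apply hD.isPB1.hom_ext
    · rw [hD.isPB1.lift_fst]
      erw [Category.assoc]
      erw [← Functor.map_comp]
      have e : prod.lift (𝟙 A) (terminal.from A ≫ ζ) ≫ (termData TS σ ζ lam).p0 = 𝟙 A :=
        Limits.prod.lift_fst _ _
      rw [e]
      simp
    · rw [hD.isPB1.lift_snd]
      erw [Category.assoc, Category.assoc lam]
      erw [← Functor.map_comp]
      have e : prod.lift (𝟙 A) (terminal.from A ≫ ζ) ≫ (termData TS σ ζ lam).p1 =
          terminal.from A ≫ ζ := Limits.prod.lift_snd _ _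
      rw [e, Functor.map_comp]
      have e2 : lam ≫ TS.T.map (terminal.from A) = terminal.from A ≫ TS.zero.app (⊤_ C) :=
        hD.toIsPreDiffBundle.lam_Tq
      rw [reassoc_of% e2, ← zero_nat ζ]
  · rw [← Functor.map_comp, sigma_unit_l hD]
    simp

lemma zero_pair : prod.lift (terminal.from A ≫ ζ) (𝟙 A) ≫ muT hD = TS.zero.app A := by
  rw [pair_mu hD]
  trans TS.zero.app A ≫ TS.T.map (prod.lift (terminal.from A ≫ ζ) (𝟙 A)) ≫ TS.T.map σ
  · rw [← Category.assoc]
    congr 1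
    apply hD.isPB1.hom_ext
    · rw [hD.isPB1.lift_fst]
      erw [Category.assoc, Category.assoc (TS.zero.app A)]
      erw [← Functor.map_comp]
      have e : prod.lift (terminal.from A ≫ ζ) (𝟙 A) ≫ (termData TS σ ζ lam).p0 =
          terminal.from A ≫ ζ := Limits.prod.lift_fst _ _
      rw [e, Functor.map_comp]
      have e4 : TS.zero.app A ≫ TS.T.map (terminal.from A) =
          terminal.from A ≫ TS.zero.app (⊤_ C) := (zero_nat (terminal.from A)).symm
      rw [reassoc_of% e4, ← zero_nat ζ]
      have e3 : ζ ≫ lam = ζ ≫ TS.zero.app A := hD.toIsPreDiffBundle.lam_zero1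
      rw [e3]
    · rw [hD.isPB1.lift_snd]
      erw [Category.assoc]
      erw [← Functor.map_comp]
      have e : prod.lift (terminal.from A ≫ ζ) (𝟙 A) ≫ (termData TS σ ζ lam).p1 = 𝟙 A :=
        Limits.prod.lift_snd _ _
      rw [e]
      simp
  · rw [← Functor.map_comp, sigma_unit_r hD]
    simp

variable {phat : TS.T.obj A ⟶ A}

lemma phat_section (hphat : IsBracket (termData TS σ ζ lam) hD.isPB1 (𝟙 (TS.T.obj A)) phat) :
    prod.lift phat (TS.p.app A) ≫ muT hD = 𝟙 (TS.T.obj A) := by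
  obtain ⟨w, hw⟩ := hphat
  rw [pair_mu hD, hw]
  exact congrArg (· ≫ TS.T.map σ)
    (liftPB1_congr hD rfl (Category.id_comp _).symm _ w)

lemma mu_section (hphat : IsBracket (termData TS σ ζ lam) hD.isPB1 (𝟙 (TS.T.obj A)) phat) :
    muT hD ≫ prod.lift phat (TS.p.app A) = 𝟙 (A ⨯ A) := by
  apply mu_mono hD
  rw [Category.assoc, phat_section hD hphat, Category.comp_id, Category.id_comp]

lemma mu_phat (hphat : IsBracket (termData TS σ ζ lam) hD.isPB1 (𝟙 (TS.T.obj A)) phat) :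
    muT hD ≫ phat = prod.fst := by
  have h := mu_section hD hphat
  calc muT hD ≫ phat = muT hD ≫ prod.lift phat (TS.p.app A) ≫ prod.fst := by
        rw [Limits.prod.lift_fst]
    _ = (muT hD ≫ prod.lift phat (TS.p.app A)) ≫ prod.fst := by rw [Category.assoc]
    _ = prod.fst := by rw [h]; exact Category.id_comp _

lemma lam_phat (hphat : IsBracket (termData TS σ ζ lam) hD.isPB1 (𝟙 (TS.T.obj A)) phat) :
    lam ≫ phat = 𝟙 A := by
  calc lam ≫ phat = (prod.lift (𝟙 A) (terminal.from A ≫ ζ) ≫ muT hD) ≫ phat := by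
        rw [lam_pair hD]
    _ = 𝟙 A := by rw [Category.assoc, mu_phat hD hphat, Limits.prod.lift_fst]

lemma zero_phat (hphat : IsBracket (termData TS σ ζ lam) hD.isPB1 (𝟙 (TS.T.obj A)) phat) :
    TS.zero.app A ≫ phat = terminal.from A ≫ ζ := by
  calc TS.zero.app A ≫ phat
      = (prod.lift (terminal.from A ≫ ζ) (𝟙 A) ≫ muT hD) ≫ phat := by rw [zero_pair hD]
    _ = terminal.from A ≫ ζ := by rw [Category.assoc, mu_phat hD hphat, Limits.prod.lift_fst]

variable {A' : C} {σ' : A' ⨯ A' ⟶ A'} {ζ' : ⊤_ C ⟶ A'} {lam' : A' ⟶ TS.T.obj A'}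

lemma linear_additive (hD' : TS.IsDiffBundle (termData TS σ' ζ' lam'))
    {phat' : TS.T.obj A' ⟶ A'}
    (hphat' : IsBracket (termData TS σ' ζ' lam') hD'.isPB1 (𝟙 (TS.T.obj A')) phat')
    {f : A ⟶ A'} (lin : f ≫ lam' = lam ≫ TS.T.map f) :
    σ ≫ f = prod.map f f ≫ σ' := by
  have lp' : lam' ≫ phat' = 𝟙 A' := lam_phat hD' hphat'
  have e0 : (lam ≫ TS.T.map f) ≫ phat' = f := by
    rw [← lin, Category.assoc, lp', Category.comp_id]
  have step0 : σ ≫ lam =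
      (TS.isPB0 A).lift (prod.fst ≫ lam) (prod.snd ≫ lam) (lam_p_eq hD _ _) ≫
        TS.add.app A := by
    have h := lam_add hD prod.fst prod.snd (lam_p_eq hD _ _)
    rw [Limits.prod.lift_fst_snd, Category.id_comp] at h
    exact h.symm
  have step1 : (TS.isPB0 A).lift (prod.fst ≫ lam) (prod.snd ≫ lam) (lam_p_eq hD _ _) ≫
      TS.T2.map f
      = (TS.isPB0 A').lift ((prod.fst ≫ f) ≫ lam') ((prod.snd ≫ f) ≫ lam')
          (lam_p_eq hD' _ _) := by
    apply (TS.isPB0 A').hom_ext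
    · rw [(TS.isPB0 A').lift_fst, Category.assoc, pi0_nat f, ← Category.assoc,
        (TS.isPB0 A).lift_fst, Category.assoc, ← lin, ← Category.assoc]
    · rw [(TS.isPB0 A').lift_snd, Category.assoc, pi1_nat f, ← Category.assoc,
        (TS.isPB0 A).lift_snd, Category.assoc, ← lin, ← Category.assoc]
  have lamadd' := lam_add hD' (prod.fst ≫ f) (prod.snd ≫ f) (lam_p_eq hD' _ _)
  have emap : prod.lift (prod.fst ≫ f) (prod.snd ≫ f) = prod.map f f := by
    apply Limits.prod.hom_ext <;> simp
  calc σ ≫ f = σ ≫ (lam ≫ TS.T.map f) ≫ phat' := by rw [e0]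
    _ = ((σ ≫ lam) ≫ TS.T.map f) ≫ phat' := by simp only [Category.assoc]
    _ = (((TS.isPB0 A).lift (prod.fst ≫ lam) (prod.snd ≫ lam) (lam_p_eq hD _ _) ≫
          TS.add.app A) ≫ TS.T.map f) ≫ phat' := by rw [step0]
    _ = (TS.isPB0 A).lift (prod.fst ≫ lam) (prod.snd ≫ lam) (lam_p_eq hD _ _) ≫
          (TS.add.app A ≫ TS.T.map f) ≫ phat' := by simp only [Category.assoc]
    _ = (TS.isPB0 A).lift (prod.fst ≫ lam) (prod.snd ≫ lam) (lam_p_eq hD _ _) ≫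
          (TS.T2.map f ≫ TS.add.app A') ≫ phat' := by rw [add_nat f]
    _ = (((TS.isPB0 A).lift (prod.fst ≫ lam) (prod.snd ≫ lam) (lam_p_eq hD _ _) ≫
          TS.T2.map f) ≫ TS.add.app A') ≫ phat' := by simp only [Category.assoc]
    _ = ((TS.isPB0 A').lift ((prod.fst ≫ f) ≫ lam') ((prod.snd ≫ f) ≫ lam')
          (lam_p_eq hD' _ _) ≫ TS.add.app A') ≫ phat' := by rw [step1]
    _ = (prod.lift (prod.fst ≫ f) (prod.snd ≫ f) ≫ σ' ≫ lam') ≫ phat' := by rw [lamadd']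
    _ = prod.lift (prod.fst ≫ f) (prod.snd ≫ f) ≫ σ' ≫ (lam' ≫ phat') := by
          simp only [Category.assoc]
    _ = prod.map f f ≫ σ' := by rw [lp', Category.comp_id, emap]

lemma linear_mu_nat (hD' : TS.IsDiffBundle (termData TS σ' ζ' lam'))
    {phat' : TS.T.obj A' ⟶ A'}
    (hphat' : IsBracket (termData TS σ' ζ' lam') hD'.isPB1 (𝟙 (TS.T.obj A')) phat')
    {f : A ⟶ A'} (lin : f ≫ lam' = lam ≫ TS.T.map f) :
    muT hD ≫ TS.T.map f = prod.map f f ≫ muT hD' := by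
  have hadd := linear_additive hD hD' hphat' lin
  have emap : prod.lift (prod.fst ≫ f) ((prod.snd : A ⨯ A ⟶ A) ≫ f) = prod.map f f := by
    apply Limits.prod.hom_ext <;> simp
  have key : ∀ (w : (prod.fst ≫ lam) ≫ TS.T.map (termData TS σ ζ lam).q =
        ((prod.snd : A ⨯ A ⟶ A) ≫ TS.zero.app A) ≫ TS.T.map (termData TS σ ζ lam).q)
      (w' : ((prod.fst ≫ f) ≫ lam') ≫ TS.T.map (termData TS σ' ζ' lam').q =
        (((prod.snd : A ⨯ A ⟶ A) ≫ f) ≫ TS.zero.app A') ≫ TS.T.map (termData TS σ' ζ' lam').q),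
      hD.isPB1.lift (prod.fst ≫ lam) ((prod.snd : A ⨯ A ⟶ A) ≫ TS.zero.app A) w ≫
        TS.T.map (prod.map f f)
      = hD'.isPB1.lift ((prod.fst ≫ f) ≫ lam') (((prod.snd : A ⨯ A ⟶ A) ≫ f) ≫ TS.zero.app A') w' := by
    intro w w'
    set L := hD.isPB1.lift (prod.fst ≫ lam) ((prod.snd : A ⨯ A ⟶ A) ≫ TS.zero.app A) w with hL
    have pm0 : prod.map f f ≫ (termData TS σ' ζ' lam').p0 = prod.fst ≫ f :=
      Limits.prod.map_fst f f
    have pm1 : prod.map f f ≫ (termData TS σ' ζ' lam').p1 = prod.snd ≫ f :=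
      Limits.prod.map_snd f f
    apply hD'.isPB1.hom_ext
    · calc (L ≫ TS.T.map (prod.map f f)) ≫ TS.T.map (termData TS σ' ζ' lam').p0
          = L ≫ TS.T.map (prod.map f f ≫ (termData TS σ' ζ' lam').p0) := by
            erw [Category.assoc, ← Functor.map_comp]
        _ = L ≫ TS.T.map (prod.fst ≫ f) := by erw [pm0]; rfl
        _ = (L ≫ TS.T.map (prod.fst : A ⨯ A ⟶ A)) ≫ TS.T.map f := by
            erw [Functor.map_comp, Category.assoc]
        _ = (prod.fst ≫ lam) ≫ TS.T.map f :=
            congrArg (· ≫ TS.T.map f) (hD.isPB1.lift_fst _ _ w)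
        _ = (prod.fst ≫ f) ≫ lam' := by
            rw [Category.assoc, ← lin, ← Category.assoc]
        _ = hD'.isPB1.lift ((prod.fst ≫ f) ≫ lam') (((prod.snd : A ⨯ A ⟶ A) ≫ f) ≫ TS.zero.app A') w' ≫
            TS.T.map (termData TS σ' ζ' lam').p0 := (hD'.isPB1.lift_fst _ _ _).symm
    · calc (L ≫ TS.T.map (prod.map f f)) ≫ TS.T.map (termData TS σ' ζ' lam').p1
          = L ≫ TS.T.map (prod.map f f ≫ (termData TS σ' ζ' lam').p1) := by
            erw [Category.assoc, ← Functor.map_comp]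
        _ = L ≫ TS.T.map (prod.snd ≫ f) := by erw [pm1]; rfl
        _ = (L ≫ TS.T.map (prod.snd : A ⨯ A ⟶ A)) ≫ TS.T.map f := by
            erw [Functor.map_comp, Category.assoc]
        _ = ((prod.snd : A ⨯ A ⟶ A) ≫ TS.zero.app A) ≫ TS.T.map f :=
            congrArg (· ≫ TS.T.map f) (hD.isPB1.lift_snd _ _ w)
        _ = ((prod.snd : A ⨯ A ⟶ A) ≫ f) ≫ TS.zero.app A' := by
            rw [Category.assoc, ← zero_nat f, ← Category.assoc]
        _ = hD'.isPB1.lift ((prod.fst ≫ f) ≫ lam') (((prod.snd : A ⨯ A ⟶ A) ≫ f) ≫ TS.zero.app A') w' ≫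
            TS.T.map (termData TS σ' ζ' lam').p1 := (hD'.isPB1.lift_snd _ _ _).symm
  calc muT hD ≫ TS.T.map f
      = (prod.lift prod.fst prod.snd ≫ muT hD) ≫ TS.T.map f := by
        rw [Limits.prod.lift_fst_snd, Category.id_comp]
    _ = (hD.isPB1.lift (prod.fst ≫ lam) ((prod.snd : A ⨯ A ⟶ A) ≫ TS.zero.app A) (tTermExt _ _) ≫
          TS.T.map σ) ≫ TS.T.map f :=
        congrArg (· ≫ TS.T.map f) (pair_mu hD prod.fst prod.snd)
    _ = hD.isPB1.lift (prod.fst ≫ lam) ((prod.snd : A ⨯ A ⟶ A) ≫ TS.zero.app A) (tTermExt _ _) ≫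
          TS.T.map (σ ≫ f) := by erw [Functor.map_comp]; simp only [Category.assoc]
    _ = hD.isPB1.lift (prod.fst ≫ lam) ((prod.snd : A ⨯ A ⟶ A) ≫ TS.zero.app A) (tTermExt _ _) ≫
          TS.T.map (prod.map f f ≫ σ') := by erw [hadd]; rfl
    _ = (hD.isPB1.lift (prod.fst ≫ lam) ((prod.snd : A ⨯ A ⟶ A) ≫ TS.zero.app A) (tTermExt _ _) ≫
          TS.T.map (prod.map f f)) ≫ TS.T.map σ' := by
        erw [Functor.map_comp]; simp only [Category.assoc]
    _ = hD'.isPB1.lift ((prod.fst ≫ f) ≫ lam') (((prod.snd : A ⨯ A ⟶ A) ≫ f) ≫ TS.zero.app A')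
          (tTermExt _ _) ≫ TS.T.map σ' :=
        congrArg (· ≫ TS.T.map σ') (key _ _)
    _ = prod.lift (prod.fst ≫ f) ((prod.snd : A ⨯ A ⟶ A) ≫ f) ≫ muT hD' := (pair_mu hD' _ _).symm
    _ = prod.map f f ≫ muT hD' := by rw [emap]

end Statement17Aux

end TangentStructure


open TangentStructure in
/-- in a Cartesian tangent category, a map `f : A ⟶ A'` between
differential bundles over the final object is a linear bundle morphism if and only if it
is differentially linear, i.e. `T(f)p̂' = p̂f`. -/
theorem linear_iff_diff_linear (TS : TangentStructure C) [HasFiniteProducts C]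
    [PreservesFiniteProducts TS.T] {A A' : C}
    (σ : A ⨯ A ⟶ A) (ζ : ⊤_ C ⟶ A) (lam : A ⟶ TS.T.obj A)
    (σ' : A' ⨯ A' ⟶ A') (ζ' : ⊤_ C ⟶ A') (lam' : A' ⟶ TS.T.obj A')
    (hD : TS.IsDiffBundle (termData TS σ ζ lam))
    (hD' : TS.IsDiffBundle (termData TS σ' ζ' lam'))
    (phat : TS.T.obj A ⟶ A) (phat' : TS.T.obj A' ⟶ A')
    (hphat : IsBracket (termData TS σ ζ lam) hD.isPB1 (𝟙 (TS.T.obj A)) phat)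
    (hphat' : IsBracket (termData TS σ' ζ' lam') hD'.isPB1 (𝟙 (TS.T.obj A')) phat')
    (f : A ⟶ A') :
    IsLinearBundleHom (termData TS σ ζ lam) (termData TS σ' ζ' lam') f (𝟙 (⊤_ C)) ↔
      TS.T.map f ≫ phat' = phat ≫ f := by
  constructor
  · intro hlin
    have hlin2 : _ ∧ _ := hlin
    have lin : f ≫ lam' = lam ≫ TS.T.map f := hlin2.2
    have hnat := linear_mu_nat hD hD' hphat' lin
    have hsec := phat_section hD hphat
    have hmp' := mu_phat hD' hphat'
    calc TS.T.map f ≫ phat'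
        = (prod.lift phat (TS.p.app A) ≫ muT hD) ≫ TS.T.map f ≫ phat' := by
          rw [hsec, Category.id_comp]
      _ = prod.lift phat (TS.p.app A) ≫ (muT hD ≫ TS.T.map f) ≫ phat' := by
          simp only [Category.assoc]
      _ = prod.lift phat (TS.p.app A) ≫ (prod.map f f ≫ muT hD') ≫ phat' := by rw [hnat]
      _ = prod.lift phat (TS.p.app A) ≫ prod.map f f ≫ muT hD' ≫ phat' := by
          simp only [Category.assoc]
      _ = prod.lift phat (TS.p.app A) ≫ prod.map f f ≫ prod.fst := by rw [hmp']
      _ = phat ≫ f := by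
          rw [Limits.prod.map_fst, ← Category.assoc, Limits.prod.lift_fst]
  · intro dl
    have z0 : TS.zero.app A ≫ phat = terminal.from A ≫ ζ := zero_phat hD hphat
    have z0' : TS.zero.app A' ≫ phat' = terminal.from A' ≫ ζ' := zero_phat hD' hphat'
    have lp : lam ≫ phat = 𝟙 A := lam_phat hD hphat
    have lp' : lam' ≫ phat' = 𝟙 A' := lam_phat hD' hphat'
    have e1 : ζ ≫ terminal.from A = 𝟙 (⊤_ C) := terminalIsTerminal.hom_ext _ _
    have hz : ζ ≫ f = ζ' := by
      calc ζ ≫ f = ((ζ ≫ terminal.from A) ≫ ζ) ≫ f := by rw [e1, Category.id_comp]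
        _ = ζ ≫ (terminal.from A ≫ ζ) ≫ f := by simp only [Category.assoc]
        _ = ζ ≫ (TS.zero.app A ≫ phat) ≫ f := by rw [z0]
        _ = ζ ≫ TS.zero.app A ≫ TS.T.map f ≫ phat' := by
            simp only [Category.assoc]; rw [← dl]
        _ = ζ ≫ f ≫ TS.zero.app A' ≫ phat' := by
            rw [show TS.zero.app A ≫ TS.T.map f ≫ phat' = f ≫ TS.zero.app A' ≫ phat' from by
              rw [← Category.assoc, ← zero_nat f, Category.assoc]]
        _ = ζ ≫ f ≫ terminal.from A' ≫ ζ' := by rw [z0']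
        _ = ((ζ ≫ f) ≫ terminal.from A') ≫ ζ' := by simp only [Category.assoc]
        _ = ζ' := by
            rw [terminalIsTerminal.hom_ext ((ζ ≫ f) ≫ terminal.from A') (𝟙 (⊤_ C)),
              Category.id_comp]
    have s' := phat_section hD' hphat'
    have hcomp : (f ≫ lam') ≫ prod.lift phat' (TS.p.app A') =
        (lam ≫ TS.T.map f) ≫ prod.lift phat' (TS.p.app A') := by
      apply Limits.prod.hom_ext
      · simp only [Category.assoc, Limits.prod.lift_fst]
        rw [lp', Category.comp_id, dl, ← Category.assoc, lp, Category.id_comp]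
      · simp only [Category.assoc, Limits.prod.lift_snd]
        have lampA' : lam' ≫ TS.p.app A' = terminal.from A' ≫ ζ' :=
          hD'.toIsPreDiffBundle.lam_p
        have lampA : lam ≫ TS.p.app A = terminal.from A ≫ ζ := hD.toIsPreDiffBundle.lam_p
        rw [lampA', p_nat f, reassoc_of% lampA, hz, ← Category.assoc,
          terminalIsTerminal.hom_ext (f ≫ terminal.from A') (terminal.from A)]
    have hq : f ≫ (termData TS σ' ζ' lam').q = (termData TS σ ζ lam).q ≫ 𝟙 (⊤_ C) :=
      terminalIsTerminal.hom_ext _ _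
    refine ⟨hq, ?_⟩
    calc f ≫ lam' = (f ≫ lam') ≫ 𝟙 (TS.T.obj A') := (Category.comp_id _).symm
      _ = (f ≫ lam') ≫ prod.lift phat' (TS.p.app A') ≫ muT hD' := by rw [s']
      _ = ((f ≫ lam') ≫ prod.lift phat' (TS.p.app A')) ≫ muT hD' := by
          simp only [Category.assoc]
      _ = ((lam ≫ TS.T.map f) ≫ prod.lift phat' (TS.p.app A')) ≫ muT hD' := by rw [hcomp]
      _ = (lam ≫ TS.T.map f) ≫ prod.lift phat' (TS.p.app A') ≫ muT hD' := by
          simp only [Category.assoc]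
      _ = (lam ≫ TS.T.map f) ≫ 𝟙 (TS.T.obj A') := by rw [s']
      _ = lam ≫ TS.T.map f := Category.comp_id _
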